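/- If A is a unital C*-algebra and τ is a tracial state on A that factors through ∏_{n=1}^∞ M_{k(n)}(ℂ) (i.e., τ = τ' ∘ φ for a unital *-homomorphism φ : A → ∏_n M_{k(n)}(ℂ) and a tracial state τ' on the product), then τ lies in the weak* closure of the finite dimensional tracial states on A. -/

import Mathlib

open scoped ComplexOrder
open Matrix

open Matrix Finset in
lemma diag_comm {m : ℕ} (μ : Fin m → ℝ) (hμ : ∑ i, μ i = 0) :
    ∃ P Q : Matrix (Fin m) (Fin m) ℂ,
      Matrix.diagonal (fun i => (μ i : ℂ)) = P * Q - Q * P := by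
  classical
  set c : Fin m → ℂ := fun i => ∑ l ∈ Finset.Iic i, (μ l : ℂ) with hc
  refine ⟨Matrix.of fun i j => if (i : ℕ) + 1 = (j : ℕ) then c i else 0,
          Matrix.of fun i j => if (j : ℕ) + 1 = (i : ℕ) then 1 else 0, ?_⟩
  ext i j
  rw [Matrix.sub_apply, Matrix.mul_apply, Matrix.mul_apply, Matrix.diagonal_apply]
  simp only [Matrix.of_apply]
  have key1 : (∑ l : Fin m, (if (i : ℕ) + 1 = (l : ℕ) then c i else 0) *
      (if (j : ℕ) + 1 = (l : ℕ) then (1:ℂ) else 0))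
      = if i = j then c i else 0 := by
    rcases eq_or_ne i j with rfl | hij
    · rw [if_pos rfl]
      by_cases h : (i : ℕ) + 1 < m
      · rw [Finset.sum_eq_single (⟨(i:ℕ)+1, h⟩ : Fin m)
          (fun l _ hl => by
            have : ¬ ((i : ℕ) + 1 = (l : ℕ)) := fun hcon => hl (Fin.ext hcon.symm)
            simp [this])
          (fun hmem => absurd (Finset.mem_univ _) hmem)]
        simp
      · have hci : c i = 0 := by
          have huniv : Finset.Iic i = Finset.univ := by
            ext l; simp only [Finset.mem_Iic, Finset.mem_univ, iff_true]
            exact Fin.le_def.mpr (by have := l.isLt; omega)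
          show (∑ l ∈ Finset.Iic i, ((μ l : ℂ))) = 0
          rw [huniv, ← Complex.ofReal_sum, hμ, Complex.ofReal_zero]
        rw [hci]
        apply Finset.sum_eq_zero
        intro l _
        have : ¬ ((i : ℕ) + 1 = (l : ℕ)) := by have := l.isLt; omega
        simp [this]
    · rw [if_neg hij]
      apply Finset.sum_eq_zero
      intro l _
      by_cases h1 : (i : ℕ) + 1 = (l : ℕ)
      · have h2 : ¬ ((j : ℕ) + 1 = (l : ℕ)) := fun hcon => hij (Fin.ext (by omega))
        simp [h2]
      · simp [h1]
  have key2 : (∑ l : Fin m, (if (l : ℕ) + 1 = (i : ℕ) then (1:ℂ) else 0) *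
      (if (l : ℕ) + 1 = (j : ℕ) then c l else 0))
      = if i = j then (∑ l ∈ Finset.Iio i, (μ l : ℂ)) else 0 := by
    rcases eq_or_ne i j with rfl | hij
    · rw [if_pos rfl]
      by_cases h : 0 < (i : ℕ)
      · have hlt : (i : ℕ) - 1 < m := by have := i.isLt; omega
        have hcond : ((⟨(i:ℕ)-1, hlt⟩ : Fin m) : ℕ) + 1 = (i : ℕ) := by simp; omega
        rw [Finset.sum_eq_single (⟨(i:ℕ)-1, hlt⟩ : Fin m)
          (fun l _ hl => by
            have : ¬ ((l : ℕ) + 1 = (i : ℕ)) := by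
              intro hcon; apply hl; apply Fin.ext; simp; omega
            simp [this])
          (fun hmem => absurd (Finset.mem_univ _) hmem)]
        rw [if_pos hcond, if_pos hcond, one_mul]
        show (∑ l ∈ Finset.Iic _, ((μ l : ℂ))) = _
        congr 1
        ext l
        simp only [Finset.mem_Iic, Finset.mem_Iio, Fin.le_def, Fin.lt_def]
        omega
      · have hIio : Finset.Iio i = (∅ : Finset (Fin m)) := by
          ext l; simp only [Finset.mem_Iio, Finset.notMem_empty, iff_false, Fin.lt_def]
          omega
        rw [hIio, Finset.sum_empty]
        apply Finset.sum_eq_zero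
        intro l _
        have : ¬ ((l : ℕ) + 1 = (i : ℕ)) := by omega
        simp [this]
    · rw [if_neg hij]
      apply Finset.sum_eq_zero
      intro l _
      by_cases h1 : (l : ℕ) + 1 = (i : ℕ)
      · have h2 : ¬ ((l : ℕ) + 1 = (j : ℕ)) := fun hcon => hij (Fin.ext (by omega))
        simp [h2]
      · simp [h1]
  rw [key1, key2]
  rcases eq_or_ne i j with rfl | hij
  · simp only [if_pos rfl]
    show _ = (∑ l ∈ Finset.Iic i, ((μ l : ℂ))) - _
    have : Finset.Iic i = insert i (Finset.Iio i) := by rw [Finset.Iio_insert]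
    rw [this, Finset.sum_insert (by simp)]
    simp
  · simp [hij]

lemma herm_traceless_comm {m : ℕ} (z : Matrix (Fin m) (Fin m) ℂ)
    (hz : z.IsHermitian) (htr : z.trace = 0) :
    ∃ P Q : Matrix (Fin m) (Fin m) ℂ, z = P * Q - Q * P := by
  classical
  set U : Matrix (Fin m) (Fin m) ℂ := (hz.eigenvectorUnitary : Matrix (Fin m) (Fin m) ℂ) with hU
  have hU1 : U * star U = 1 := Matrix.mem_unitaryGroup_iff.mp hz.eigenvectorUnitary.2
  have hU1' : star U * U = 1 := Matrix.mem_unitaryGroup_iff'.mp hz.eigenvectorUnitary.2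
  have hsum : ∑ i, hz.eigenvalues i = 0 := by
    have h1 : z.trace = Matrix.trace (Matrix.diagonal (RCLike.ofReal ∘ hz.eigenvalues)
        : Matrix (Fin m) (Fin m) ℂ) := by
      conv_lhs => rw [hz.spectral_theorem]
      rw [Unitary.conjStarAlgAut_apply, Matrix.trace_mul_cycle, ← hU, hU1', Matrix.one_mul]
    rw [htr, Matrix.trace_diagonal] at h1
    have : ((∑ i, hz.eigenvalues i : ℝ) : ℂ) = 0 := by
      rw [Complex.ofReal_sum]; exact h1.symm
    exact_mod_cast this
  obtain ⟨P, Q, hPQ⟩ := diag_comm hz.eigenvalues hsum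
  have hdiag : Matrix.diagonal (RCLike.ofReal ∘ hz.eigenvalues)
      = (Matrix.diagonal (fun i => ((hz.eigenvalues i : ℝ) : ℂ))
        : Matrix (Fin m) (Fin m) ℂ) := rfl
  refine ⟨U * P * star U, U * Q * star U, ?_⟩
  have expand : (U * P * star U) * (U * Q * star U) - (U * Q * star U) * (U * P * star U)
      = U * (P * Q - Q * P) * star U := by
    calc (U * P * star U) * (U * Q * star U) - (U * Q * star U) * (U * P * star U)
        = U * (P * (star U * U) * Q) * star U - U * (Q * (star U * U) * P) * star U := by
          noncomm_ring
      _ = U * (P * Q - Q * P) * star U := by rw [hU1']; noncomm_ring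
  rw [expand, ← hPQ, ← hdiag]
  conv_lhs => rw [hz.spectral_theorem, Unitary.conjStarAlgAut_apply]

lemma tracial_star_apply {B : Type*} [Ring B] [StarRing B] [Algebra ℂ B] [StarModule ℂ B]
    (T : B →ₗ[ℂ] ℂ) (hpos : ∀ x, 0 ≤ T (star x * x)) (x : B) :
    T (star x) = starRingEnd ℂ (T x) := by
  have him : ∀ y : B, (T (star y * y)).im = 0 := by
    intro y
    have := hpos y
    rw [Complex.le_def] at this
    exact this.2.symm
  have key : ∀ a b : B, T (star b * a) = starRingEnd ℂ (T (star a * b)) := by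
    intro a b
    set u := T (star a * b) with hu
    set v := T (star b * a) with hv
    have e1 : u.im + v.im = 0 := by
      have h := him (a + b)
      have hx : star (a + b) * (a + b)
          = (star a * a + star b * b) + (star a * b + star b * a) := by
        rw [star_add, add_mul, mul_add, mul_add]; abel
      rw [hx, map_add, map_add, map_add] at h
      simp only [Complex.add_im, him a, him b] at h
      rw [← hu, ← hv] at h
      linarith
    have e2 : u.re - v.re = 0 := by
      have h := him (a + (Complex.I : ℂ) • b)
      have hexp : star (a + (Complex.I : ℂ) • b) * (a + (Complex.I : ℂ) • b)
          = (star a * a + star b * b) + ((Complex.I : ℂ) • (star a * b)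
            - (Complex.I : ℂ) • (star b * a)) := by
        rw [star_add, star_smul,
          show star (Complex.I) = -Complex.I from by rw [Complex.star_def, Complex.conj_I]]
        simp only [add_mul, mul_add, smul_mul_assoc, mul_smul_comm, smul_smul,
          neg_smul, neg_mul, Complex.I_mul_I, neg_neg, one_smul]
        match_scalars <;> simp [Complex.I_sq]
      rw [hexp, map_add, map_add, map_sub, LinearMap.map_smul, LinearMap.map_smul] at h
      simp only [Complex.add_im, Complex.sub_im, smul_eq_mul, Complex.mul_im,
        Complex.I_re, Complex.I_im, him a, him b, zero_mul, one_mul, zero_add, add_zero] at h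
      rw [← hu, ← hv] at h
      linarith
    apply Complex.ext
    · simp only [Complex.conj_re]; linarith
    · simp only [Complex.conj_im]; linarith
  have h1 := key x 1
  rw [star_one, one_mul, mul_one] at h1
  rw [h1]
  exact (Complex.conj_conj _).symm

section Pi
variable {k : ℕ → ℕ}

lemma T_traceless (T : ((n : ℕ) → Matrix (Fin (k n)) (Fin (k n)) ℂ) →ₗ[ℂ] ℂ)
    (htr : ∀ x y : ((n : ℕ) → Matrix (Fin (k n)) (Fin (k n)) ℂ), T (x * y) = T (y * x))
    (z : ((n : ℕ) → Matrix (Fin (k n)) (Fin (k n)) ℂ)) (hz : ∀ n, (z n).trace = 0) :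
    T z = 0 := by
  have herm_case : ∀ v : ((n : ℕ) → Matrix (Fin (k n)) (Fin (k n)) ℂ),
      (∀ n, (v n).IsHermitian) → (∀ n, (v n).trace = 0) → T v = 0 := by
    intro v hherm hvtr
    choose P Q hPQ using fun n => herm_traceless_comm (v n) (hherm n) (hvtr n)
    have hv : v = P * Q - Q * P := funext hPQ
    rw [hv, map_sub, htr P Q, sub_self]
  set y := z + star z with hy
  set w := Complex.I • (star z - z) with hw
  have hzyw : z = (2⁻¹ : ℂ) • y + (Complex.I / 2) • w := by
    rw [hy, hw]
    match_scalars
    · linear_combination (1/2 : ℂ) * Complex.I_sq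
    · linear_combination (-1/2 : ℂ) * Complex.I_sq
  have hysa : star y = y := by rw [hy, star_add, star_star, add_comm]
  have hwsa : star w = w := by
    rw [hw, star_smul, star_sub, star_star,
      show star (Complex.I) = -Complex.I from by rw [Complex.star_def, Complex.conj_I]]
    match_scalars <;> ring
  have htrst : ∀ n, ((star z) n).trace = 0 := by
    intro n
    have h1 : (star z) n = (z n)ᴴ := rfl
    rw [h1, Matrix.trace_conjTranspose, hz n, star_zero]
  have hytr : ∀ n, (y n).trace = 0 := by
    intro n
    have h1 : y n = z n + (star z) n := rfl
    rw [h1, Matrix.trace_add, hz n, htrst n, add_zero]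
  have hwtr : ∀ n, (w n).trace = 0 := by
    intro n
    have h1 : w n = Complex.I • ((star z) n - z n) := rfl
    rw [h1, Matrix.trace_smul, Matrix.trace_sub, hz n, htrst n, sub_zero, smul_zero]
  have hTy : T y = 0 := herm_case y (fun n => congrFun hysa n) hytr
  have hTw : T w = 0 := herm_case w (fun n => congrFun hwsa n) hwtr
  rw [hzyw, map_add, LinearMap.map_smul, LinearMap.map_smul, hTy, hTw, smul_zero, smul_zero, add_zero]

lemma T_scalarize (hk : ∀ n, 0 < k n)
    (T : ((n : ℕ) → Matrix (Fin (k n)) (Fin (k n)) ℂ) →ₗ[ℂ] ℂ)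
    (htr : ∀ x y : ((n : ℕ) → Matrix (Fin (k n)) (Fin (k n)) ℂ), T (x * y) = T (y * x))
    (w : ((n : ℕ) → Matrix (Fin (k n)) (Fin (k n)) ℂ)) :
    T w = T (fun n => ((w n).trace / (k n : ℂ)) • 1) := by
  set s : ((n : ℕ) → Matrix (Fin (k n)) (Fin (k n)) ℂ) :=
    fun n => ((w n).trace / (k n : ℂ)) • 1 with hs
  have hker : T (w - s) = 0 := by
    apply T_traceless T htr
    intro n
    have hsn : (w - s) n = w n - ((w n).trace / (k n : ℂ)) • 1 := rfl
    have hne : ((k n : ℂ)) ≠ 0 := by exact_mod_cast (hk n).ne'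
    rw [hsn, Matrix.trace_sub, Matrix.trace_smul, Matrix.trace_one]
    simp only [smul_eq_mul, Fintype.card_fin]
    field_simp
    ring
  rw [map_sub] at hker
  exact sub_eq_zero.mp hker

end Pi

/-- A tracial state on a unital complex `*`-algebra. -/
def IsTracialState {A : Type*} [Ring A] [StarRing A] [Algebra ℂ A]
    (τ : A →ₗ[ℂ] ℂ) : Prop :=
  τ 1 = 1 ∧ (∀ a, 0 ≤ τ (star a * a)) ∧ (∀ a b, τ (a * b) = τ (b * a))

/-- A tracial state `τ` is finite dimensional if `A / I_τ` is finite dimensional. -/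
def IsFiniteDimensionalTrace {A : Type*} [Ring A] [StarRing A] [Algebra ℂ A]
    (τ : A →ₗ[ℂ] ℂ) : Prop :=
  ∃ S : Submodule ℂ A, (∀ a, a ∈ S ↔ τ (star a * a) = 0) ∧ FiniteDimensional ℂ (A ⧸ S)

theorem stmt_11 {A : Type*} [CStarAlgebra A]
    (k : ℕ → ℕ) (hk : ∀ n, 0 < k n)
    (φ : A →⋆ₐ[ℂ] ((n : ℕ) → Matrix (Fin (k n)) (Fin (k n)) ℂ))
    (τ' : ((n : ℕ) → Matrix (Fin (k n)) (Fin (k n)) ℂ) →ₗ[ℂ] ℂ)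
    (hτ' : IsTracialState τ')
    (τ : A →ₗ[ℂ] ℂ) (hτfac : ∀ a, τ a = τ' (φ a))
    (S : Finset A) (ε : ℝ) (hε : 0 < ε) :
    ∃ σ : A →ₗ[ℂ] ℂ, IsTracialState σ ∧ IsFiniteDimensionalTrace σ ∧
      ∀ a ∈ S, dist (τ a) (σ a) < ε := by
  classical
  obtain ⟨hT1, hTpos, hTtr⟩ := hτ'
  have hstar : ∀ x, τ' (star x) = starRingEnd ℂ (τ' x) := tracial_star_apply τ' hTpos
  set v : ℕ → (↥S → ℂ) := fun n a => ((φ (a : A)) n).trace / (k n : ℂ) with hv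
  set p : (↥S → ℂ) := fun a => τ (a : A) with hp
  -- a useful computation of traces of xᴴ * x
  have htrpos : ∀ (m : ℕ) (x : Matrix (Fin m) (Fin m) ℂ), (xᴴ * x).trace
      = ((∑ j, ∑ l, Complex.normSq (x l j) : ℝ) : ℂ) := by
    intro m x
    rw [Matrix.trace]
    push_cast
    refine Finset.sum_congr rfl fun j _ => ?_
    rw [Matrix.diag_apply, Matrix.mul_apply]
    refine Finset.sum_congr rfl fun l _ => ?_
    rw [Matrix.conjTranspose_apply]
    rw [Complex.normSq_eq_conj_mul_self]
    rfl
  -- Step 1: p lies in the closure of the convex hull of the v n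
  have hmem : p ∈ closure (convexHull ℝ (Set.range v)) := by
    by_contra hnot
    obtain ⟨f, u, hfu, hup⟩ := geometric_hahn_banach_closed_point
      ((convex_convexHull ℝ _).closure) isClosed_closure hnot
    set c : ↥S → ℂ := fun a => (f (Pi.single a 1) : ℂ) + (f (Pi.single a Complex.I) : ℂ) * Complex.I
      with hcdef
    -- representation of f
    have hf : ∀ wv : ↥S → ℂ, f wv = ∑ a, ((starRingEnd ℂ) (c a) * wv a).re := by
      intro wv
      have hdec : wv = ∑ a : ↥S, Pi.single a (wv a) := (Finset.univ_sum_single wv).symm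
      calc f wv = f (∑ a : ↥S, Pi.single a (wv a)) := by rw [← hdec]
        _ = ∑ a : ↥S, f (Pi.single a (wv a)) := by rw [map_sum]
        _ = ∑ a : ↥S, ((starRingEnd ℂ) (c a) * wv a).re := by
            refine Finset.sum_congr rfl fun a _ => ?_
            have hz : Pi.single a (wv a) = (wv a).re • (Pi.single a (1:ℂ) : ↥S → ℂ)
                + (wv a).im • (Pi.single a (Complex.I) : ↥S → ℂ) := by
              rw [← Pi.single_smul, ← Pi.single_smul, ← Pi.single_add]
              refine congrArg _ ?_
              simp only [Complex.real_smul, smul_eq_mul, mul_one]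
              exact (Complex.re_add_im (wv a)).symm
            rw [hz, map_add, f.map_smul, f.map_smul]
            rw [hcdef]
            simp only [smul_eq_mul, map_add, _root_.map_mul, Complex.mul_re, Complex.add_re,
              Complex.conj_re, Complex.conj_im, Complex.add_im, Complex.mul_im,
              Complex.ofReal_re, Complex.ofReal_im, Complex.I_re, Complex.I_im]
            ring
    -- the element of the product algebra
    set xb : ((n : ℕ) → Matrix (Fin (k n)) (Fin (k n)) ℂ) :=
      ∑ a : ↥S, (starRingEnd ℂ) (c a) • φ (a : A) with hxb
    have hxbn : ∀ n, xb n = ∑ a : ↥S, (starRingEnd ℂ) (c a) • (φ (a : A) n) := by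
      intro n; rw [hxb]; simp [Finset.sum_apply]
    have hgv : ∀ n, (xb n).trace / (k n : ℂ) = ∑ a : ↥S, (starRingEnd ℂ) (c a) * v n a := by
      intro n
      rw [hxbn n, Matrix.trace_sum, Finset.sum_div]
      refine Finset.sum_congr rfl fun a _ => ?_
      rw [Matrix.trace_smul, smul_eq_mul, mul_div_assoc, hv]
    have hhn : ∀ n, ((xb n).trace / (k n : ℂ)).re = f (v n) := by
      intro n
      rw [hf (v n), hgv n, Complex.re_sum]
    have hhu : ∀ n, ((xb n).trace / (k n : ℂ)).re < u := by
      intro n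
      rw [hhn n]
      exact hfu (v n) (subset_closure (subset_convexHull ℝ _ (Set.mem_range_self n)))
    -- τ' of xb
    have hτxb : τ' xb = ∑ a : ↥S, (starRingEnd ℂ) (c a) * τ (a : A) := by
      rw [hxb, map_sum]
      refine Finset.sum_congr rfl fun a _ => ?_
      rw [LinearMap.map_smul, smul_eq_mul, hτfac]
    have hfp : f p = (τ' xb).re := by
      rw [hf p, hτxb, Complex.re_sum]
    -- scalarization
    have hscal : τ' xb = τ' (fun n => ((xb n).trace / (k n : ℂ)) • 1) :=
      T_scalarize hk τ' hTtr xb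
    set Dg : ((n : ℕ) → Matrix (Fin (k n)) (Fin (k n)) ℂ) :=
      fun n => ((xb n).trace / (k n : ℂ)) • 1 with hDg
    set Dh : ((n : ℕ) → Matrix (Fin (k n)) (Fin (k n)) ℂ) :=
      fun n => ((((xb n).trace / (k n : ℂ)).re : ℝ) : ℂ) • 1 with hDh
    have hDgstar : star Dg = fun n => (starRingEnd ℂ) ((xb n).trace / (k n : ℂ)) • 1 := by
      funext n
      show star (Dg n) = _
      rw [hDg]
      show star (((xb n).trace / (k n : ℂ)) • (1 : Matrix (Fin (k n)) (Fin (k n)) ℂ)) = _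
      rw [star_smul, star_one]
      rfl
    have hDh2 : Dh = (2⁻¹ : ℂ) • (Dg + star Dg) := by
      rw [hDgstar, hDh, hDg]
      funext n
      show _ = (2⁻¹ : ℂ) • (((xb n).trace / (k n : ℂ)) • (1 : Matrix (Fin (k n)) (Fin (k n)) ℂ)
        + (starRingEnd ℂ) ((xb n).trace / (k n : ℂ)) • 1)
      rw [← add_smul, smul_smul]
      congr 1
      rw [Complex.add_conj]
      push_cast
      ring
    have hτDh : τ' Dh = ((f p : ℝ) : ℂ) := by
      rw [hDh2, LinearMap.map_smul, map_add, hstar Dg, ← hscal, hfp]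
      rw [smul_eq_mul, Complex.add_conj]
      push_cast
      ring
    -- positivity gives the contradiction
    set r : ((n : ℕ) → Matrix (Fin (k n)) (Fin (k n)) ℂ) :=
      fun n => ((Real.sqrt (u - ((xb n).trace / (k n : ℂ)).re) : ℝ) : ℂ) • 1 with hr
    have hrr : star r * r = (fun n => ((u : ℝ) : ℂ) • 1) - Dh := by
      funext n
      have hle : 0 ≤ u - ((xb n).trace / (k n : ℂ)).re := le_of_lt (sub_pos.mpr (hhu n))
      show star (r n) * r n = ((u : ℝ) : ℂ) • 1 - Dh n
      have hrn : r n = ((Real.sqrt (u - ((xb n).trace / (k n : ℂ)).re) : ℝ) : ℂ)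
        • (1 : Matrix (Fin (k n)) (Fin (k n)) ℂ) := rfl
      have hDhn : Dh n = ((((xb n).trace / (k n : ℂ)).re : ℝ) : ℂ)
        • (1 : Matrix (Fin (k n)) (Fin (k n)) ℂ) := rfl
      rw [hrn, hDhn, star_smul, star_one, Complex.star_def, Complex.conj_ofReal, smul_mul_smul_comm, mul_one,
        ← Complex.ofReal_mul, Real.mul_self_sqrt hle, ← sub_smul, ← Complex.ofReal_sub]
    have hpos0 := hTpos r
    rw [hrr, map_sub] at hpos0
    have hu1 : τ' (fun n => ((u : ℝ) : ℂ) • 1) = ((u : ℝ) : ℂ) := by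
      have h1 : (fun n => ((u : ℝ) : ℂ) • (1 : Matrix (Fin (k n)) (Fin (k n)) ℂ))
          = ((u : ℝ) : ℂ) • (1 : ((n : ℕ) → Matrix (Fin (k n)) (Fin (k n)) ℂ)) := rfl
      rw [h1, LinearMap.map_smul, hT1, smul_eq_mul, mul_one]
    rw [hu1, hτDh] at hpos0
    have hfin : (0:ℝ) ≤ u - f p := by
      rw [Complex.le_def] at hpos0
      have h2 := hpos0.1
      simpa using h2
    linarith
  -- Step 2: extract a convex combination
  rw [Metric.mem_closure_iff] at hmem
  obtain ⟨q, hq, hdq⟩ := hmem ε hε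
  rw [convexHull_eq] at hq
  obtain ⟨ι, t, wt, zt, hw0, hw1, hzt, hcm⟩ := hq
  set N : ι → ℕ := fun i => if h : ∃ n, v n = zt i then h.choose else 0 with hN
  have hNv : ∀ i ∈ t, v (N i) = zt i := by
    intro i hi
    obtain ⟨n, hn⟩ := hzt i hi
    have hex : ∃ n, v n = zt i := ⟨n, hn⟩
    rw [hN]
    simp only [dif_pos hex]
    exact hex.choose_spec
  -- the candidate functional
  set trL : ℕ → (A →ₗ[ℂ] ℂ) := fun n => ((k n : ℂ))⁻¹ •
    ((Matrix.traceLinearMap (Fin (k n)) ℂ ℂ) ∘ₗ ((LinearMap.proj n) ∘ₗ φ.toLinearMap)) with htrL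
  have htrLa : ∀ (n : ℕ) (a : A), trL n a = ((φ a) n).trace / (k n : ℂ) := by
    intro n a
    rw [htrL]
    simp only [LinearMap.smul_apply, LinearMap.coe_comp, Function.comp_apply,
      LinearMap.proj_apply, AlgHom.toLinearMap_apply, smul_eq_mul]
    rw [div_eq_inv_mul]
    rfl
  set σ : A →ₗ[ℂ] ℂ := ∑ i ∈ t, (wt i : ℂ) • trL (N i) with hσ
  have hσa : ∀ a : A, σ a = ∑ i ∈ t, (wt i : ℂ) * (((φ a) (N i)).trace / (k (N i) : ℂ)) := by
    intro a
    rw [hσ, LinearMap.sum_apply]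
    refine Finset.sum_congr rfl fun i _ => ?_
    rw [LinearMap.smul_apply, htrLa, smul_eq_mul]
  refine ⟨σ, ⟨?_, ?_, ?_⟩, ?_, ?_⟩
  · -- unital
    rw [hσa 1, _root_.map_one]
    have h1 : ∀ i ∈ t, (wt i : ℂ) * ((((1 : ((n : ℕ) → Matrix (Fin (k n)) (Fin (k n)) ℂ)) (N i)).trace
        / (k (N i) : ℂ))) = ((wt i : ℝ) : ℂ) := by
      intro i _
      have hone : (1 : ((n : ℕ) → Matrix (Fin (k n)) (Fin (k n)) ℂ)) (N i)
          = (1 : Matrix (Fin (k (N i))) (Fin (k (N i))) ℂ) := rfl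
      rw [hone, Matrix.trace_one, Fintype.card_fin,
        div_self (by exact_mod_cast (hk (N i)).ne' : ((k (N i) : ℂ)) ≠ 0), mul_one]
    rw [Finset.sum_congr rfl h1, ← Complex.ofReal_sum, hw1, Complex.ofReal_one]
  · -- positive
    intro a
    rw [hσa (star a * a), _root_.map_mul, StarHomClass.map_star]
    apply Finset.sum_nonneg
    intro i hi
    have hterm : (star (φ a) * φ a) (N i) = ((φ a) (N i))ᴴ * ((φ a) (N i)) := rfl
    rw [hterm, htrpos]
    have hcast : (wt i : ℂ) * (((∑ j, ∑ l, Complex.normSq ((φ a) (N i) l j) : ℝ) : ℂ)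
        / (k (N i) : ℂ))
        = (((wt i * ((∑ j, ∑ l, Complex.normSq ((φ a) (N i) l j)) / (k (N i)) ) : ℝ)) : ℂ) := by
      push_cast
      ring
    rw [hcast]
    rw [Complex.zero_le_real]
    have hρ : 0 ≤ (∑ j, ∑ l, Complex.normSq ((φ a) (N i) l j) : ℝ) :=
      Finset.sum_nonneg fun j _ => Finset.sum_nonneg fun l _ => Complex.normSq_nonneg _
    exact mul_nonneg (hw0 i hi) (div_nonneg hρ (by positivity))
  · -- tracial
    intro a b
    rw [hσa (a * b), hσa (b * a), _root_.map_mul, _root_.map_mul]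
    refine Finset.sum_congr rfl fun i _ => ?_
    have h1 : (φ a * φ b) (N i) = (φ a) (N i) * (φ b) (N i) := rfl
    have h2 : (φ b * φ a) (N i) = (φ b) (N i) * (φ a) (N i) := rfl
    rw [h1, h2, Matrix.trace_mul_comm]
  · -- finite dimensional
    set t' : Finset ι := t.filter (fun i => wt i ≠ 0) with ht'
    set L : A →ₗ[ℂ] (∀ i : ↥t', Matrix (Fin (k (N i.1))) (Fin (k (N i.1))) ℂ) :=
      LinearMap.pi (fun i => (LinearMap.proj (N i.1)) ∘ₗ φ.toLinearMap) with hL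
    have hLa : ∀ (a : A) (i : ↥t'), L a i = (φ a) (N i.1) := by
      intro a i
      rw [hL]
      simp [LinearMap.pi_apply]
    refine ⟨LinearMap.ker L, ?_, ?_⟩
    · intro a
      constructor
      · intro hker
        rw [LinearMap.mem_ker] at hker
        rw [hσa (star a * a), _root_.map_mul, StarHomClass.map_star]
        apply Finset.sum_eq_zero
        intro i hi
        by_cases hwi : wt i = 0
        · simp [hwi]
        · have hz : (φ a) (N i) = 0 := by
            have h3 := congrFun hker (⟨i, Finset.mem_filter.mpr ⟨hi, hwi⟩⟩ : ↥t')
            rw [hLa a ⟨i, Finset.mem_filter.mpr ⟨hi, hwi⟩⟩] at h3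
            exact h3
          have hterm : (star (φ a) * φ a) (N i) = ((φ a) (N i))ᴴ * ((φ a) (N i)) := rfl
          rw [hterm, hz]
          simp
      · intro hzero
        rw [LinearMap.mem_ker]
        rw [hσa (star a * a), _root_.map_mul, StarHomClass.map_star] at hzero
        have hterm : ∀ i ∈ t, (wt i : ℂ) * (((star (φ a) * φ a) (N i)).trace / (k (N i) : ℂ))
            = (((wt i * ((∑ j, ∑ l, Complex.normSq ((φ a) (N i) l j)) / (k (N i)) ) : ℝ)) : ℂ) := by
          intro i _
          have h1 : (star (φ a) * φ a) (N i) = ((φ a) (N i))ᴴ * ((φ a) (N i)) := rfl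
          rw [h1, htrpos]
          push_cast
          ring
        rw [Finset.sum_congr rfl hterm, ← Complex.ofReal_sum, Complex.ofReal_eq_zero] at hzero
        have hzero2 := (Finset.sum_eq_zero_iff_of_nonneg ?hnn).mp hzero
        case hnn =>
          intro i hi
          have hρ : 0 ≤ (∑ j, ∑ l, Complex.normSq ((φ a) (N i) l j) : ℝ) :=
            Finset.sum_nonneg fun j _ => Finset.sum_nonneg fun l _ => Complex.normSq_nonneg _
          exact mul_nonneg (hw0 i hi) (div_nonneg hρ (by positivity))
        funext i
        rw [hLa a i]
        obtain ⟨i, hi⟩ := i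
        have hmem' := Finset.mem_filter.mp hi
        have h4 := hzero2 i hmem'.1
        have hwpos : 0 < wt i := lt_of_le_of_ne (hw0 i hmem'.1) (Ne.symm hmem'.2)
        have hρ0 : (∑ j, ∑ l, Complex.normSq ((φ a) (N i) l j) : ℝ) = 0 := by
          have h5 : ((∑ j, ∑ l, Complex.normSq ((φ a) (N i) l j)) / (k (N i)) : ℝ) = 0 := by
            by_contra hc
            have := mul_ne_zero (ne_of_gt hwpos) hc
            exact this h4
          have hkne : ((k (N i)) : ℝ) ≠ 0 := by exact_mod_cast (hk (N i)).ne'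
          field_simp at h5
          exact h5.trans (mul_zero _)
        have hentry : ∀ j l, Complex.normSq ((φ a) (N i) l j) = 0 := by
          intro j l
          have hn1 : ∀ j ∈ (Finset.univ : Finset (Fin (k (N i)))),
              (0:ℝ) ≤ ∑ l, Complex.normSq ((φ a) (N i) l j) :=
            fun j _ => Finset.sum_nonneg fun l _ => Complex.normSq_nonneg _
          have h6 := (Finset.sum_eq_zero_iff_of_nonneg hn1).mp hρ0 j (Finset.mem_univ j)
          have hn2 : ∀ l ∈ (Finset.univ : Finset (Fin (k (N i)))),
              (0:ℝ) ≤ Complex.normSq ((φ a) (N i) l j) :=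
            fun l _ => Complex.normSq_nonneg _
          exact (Finset.sum_eq_zero_iff_of_nonneg hn2).mp h6 l (Finset.mem_univ l)
        show (φ a) (N i) = 0
        ext l j
        exact Complex.normSq_eq_zero.mp (hentry j l) ▸ rfl
    · haveI : FiniteDimensional ℂ (∀ i : ↥t', Matrix (Fin (k (N i.1))) (Fin (k (N i.1))) ℂ) :=
        inferInstance
      exact Module.Finite.equiv (LinearMap.quotKerEquivRange L).symm
  · -- distance
    intro a ha
    have hq1 : q = ∑ i ∈ t, wt i • zt i := by
      rw [← hcm, Finset.centerMass_eq_of_sum_1 _ _ hw1]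
    have hqa : q ⟨a, ha⟩ = σ a := by
      rw [hq1, hσa a, Finset.sum_apply]
      refine Finset.sum_congr rfl fun i hi => ?_
      rw [Pi.smul_apply, ← hNv i hi, hv]
      rw [Complex.real_smul]
    have hpa : p ⟨a, ha⟩ = τ a := rfl
    calc dist (τ a) (σ a) = dist (p ⟨a, ha⟩) (q ⟨a, ha⟩) := by rw [hqa, hpa]
      _ ≤ dist p q := dist_le_pi_dist p q ⟨a, ha⟩
      _ < ε := hdq
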